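/- Let ω be a nonnegative integrable function on [0,1) with positive tail integrals. If there is a constant C ≥ 1 with ŵ(r) ≤ C·ŵ((1+r)/2) for all 0 ≤ r < 1, then there exists a constant C' > 0 such that ω_n ≤ C'·ω_{2n} for all natural numbers n ≥ 1, where ω_x = ∫_0^1 s^x ω(s) ds. -/

import Mathlib

open MeasureTheory Set

/-- The tail integral of a radial weight. -/
noncomputable def tl (ω : ℝ → ℝ) (r : ℝ) : ℝ := ∫ s in r..1, ω s

/-- The moments of a radial weight. -/
noncomputable def mom (ω : ℝ → ℝ) (n : ℕ) : ℝ := ∫ s in (0:ℝ)..1, s ^ n * ω s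
variable {ω : ℝ → ℝ}

lemma hIcc (hint : IntegrableOn ω (Ico (0:ℝ) 1)) : IntegrableOn ω (Icc (0:ℝ) 1) := by
  rw [IntegrableOn, ← Measure.restrict_congr_set Ico_ae_eq_Icc]; exact hint

lemma hIoc (hint : IntegrableOn ω (Ico (0:ℝ) 1)) : IntegrableOn ω (Ioc (0:ℝ) 1) := by
  rw [IntegrableOn, Measure.restrict_congr_set Ioc_ae_eq_Icc]; exact hIcc hint

lemma momA (hint : IntegrableOn ω (Ico (0:ℝ) 1)) {n : ℕ} (hn : 1 ≤ n) :
    mom ω n = ∫ t in (0:ℝ)..1, ((n : ℝ) * t ^ (n-1)) * tl ω t := by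
  set μ := volume.restrict (Ioc (0:ℝ) 1) with hμ
  have hμω : Integrable ω μ := hIoc hint
  haveI : IsFiniteMeasure μ := ⟨by simp [hμ, Measure.restrict_apply_univ, Real.volume_Ioc]⟩
  set c : ℝ → ℝ := fun t => (n:ℝ) * t ^ (n-1) with hc
  set f : ℝ → ℝ → ℝ := fun s t => (if t < s then c t else 0) * ω s with hf
  have hcont : Continuous c := by fun_prop
  have hmeas : AEStronglyMeasurable (Function.uncurry f) (μ.prod μ) := by
    have h1 : Measurable fun p : ℝ × ℝ => (if p.2 < p.1 then c p.2 else 0) :=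
      Measurable.ite (measurableSet_lt measurable_snd measurable_fst)
        (hcont.measurable.comp measurable_snd) measurable_const
    exact (h1.aestronglyMeasurable).mul hμω.aestronglyMeasurable.comp_fst
  have h0int : Integrable (fun s => (n:ℝ) * ‖ω s‖) μ := hμω.norm.const_mul _
  have hbound : Integrable (fun p : ℝ × ℝ => (n:ℝ) * ‖ω p.1‖) (μ.prod μ) := by
    refine (integrable_prod_iff h0int.aestronglyMeasurable.comp_fst).2 ⟨?_, ?_⟩
    · exact Filter.Eventually.of_forall fun x => by simpa using integrable_const ((n:ℝ) * ‖ω x‖)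
    · simp only [integral_const, smul_eq_mul]
      exact (h0int.norm.const_mul _)
  have hintf : Integrable (Function.uncurry f) (μ.prod μ) := by
    refine hbound.mono' hmeas ?_
    have hmem : ∀ᵐ p ∂(μ.prod μ), p ∈ Ioc (0:ℝ) 1 ×ˢ Ioc (0:ℝ) 1 := by
      rw [hμ, Measure.prod_restrict]
      exact ae_restrict_mem (measurableSet_Ioc.prod measurableSet_Ioc)
    filter_upwards [hmem] with p hp
    have ht : p.2 ∈ Ioc (0:ℝ) 1 := hp.2
    have h2 : ‖(if p.2 < p.1 then c p.2 else 0)‖ ≤ (n:ℝ) := by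
      split
      · rw [Real.norm_eq_abs, abs_of_nonneg (mul_nonneg (Nat.cast_nonneg n) (pow_nonneg ht.1.le _))]
        calc (n:ℝ) * p.2 ^ (n-1) ≤ (n:ℝ) * 1 ^ (n-1) := by
              gcongr
              exacts [ht.1.le, ht.2]
          _ = (n:ℝ) := by simp
      · simp
    calc ‖Function.uncurry f p‖ = ‖(if p.2 < p.1 then c p.2 else 0)‖ * ‖ω p.1‖ := norm_mul _ _
      _ ≤ (n:ℝ) * ‖ω p.1‖ := mul_le_mul_of_nonneg_right h2 (norm_nonneg _)
  have hswap : ∫ s, ∫ t, f s t ∂μ ∂μ = ∫ t, ∫ s, f s t ∂μ ∂μ := integral_integral_swap hintf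
  have hL : ∫ s, ∫ t, f s t ∂μ ∂μ = mom ω n := by
    rw [mom, intervalIntegral.integral_of_le zero_le_one, hμ]
    refine integral_congr_ae ?_
    filter_upwards [ae_restrict_mem measurableSet_Ioc] with s hs
    have h1 : ∫ t, f s t ∂μ = (∫ t, (if t < s then c t else 0) ∂μ) * ω s :=
      integral_mul_const _ _
    rw [h1]
    congr 1
    have h2 : (fun t => if t < s then c t else 0) = (Iio s).indicator c := by
      ext t; simp [indicator, mem_Iio]
    rw [h2, hμ, integral_indicator measurableSet_Iio,
      Measure.restrict_restrict measurableSet_Iio]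
    have h3 : Iio s ∩ Ioc 0 1 = Ioo 0 s := by
      ext t
      simp only [mem_inter_iff, mem_Iio, mem_Ioc, mem_Ioo]
      constructor
      · rintro ⟨h, h0, _⟩; exact ⟨h0, h⟩
      · rintro ⟨h0, h⟩; exact ⟨h, h0, le_trans h.le hs.2⟩
    rw [h3, show (volume : Measure ℝ).restrict (Ioo 0 s) = volume.restrict (Ioc 0 s)
        from Measure.restrict_congr_set Ioo_ae_eq_Ioc,
      ← intervalIntegral.integral_of_le hs.1.le, hc,
      intervalIntegral.integral_const_mul, integral_pow]
    have h4 : n - 1 + 1 = n := Nat.sub_add_cancel hn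
    have h5 : ((n - 1 : ℕ) : ℝ) + 1 = (n : ℝ) := by
      rw [Nat.cast_sub hn]; push_cast; ring
    have hn0 : (n : ℝ) ≠ 0 := by positivity
    rw [h4, h5, zero_pow (by omega : n ≠ 0), sub_zero]
    field_simp
  have hR : ∫ t, ∫ s, f s t ∂μ ∂μ = ∫ t in (0:ℝ)..1, ((n : ℝ) * t ^ (n-1)) * tl ω t := by
    rw [intervalIntegral.integral_of_le zero_le_one, hμ]
    refine integral_congr_ae ?_
    filter_upwards [ae_restrict_mem measurableSet_Ioc] with t ht
    have h1 : (fun s => f s t) = fun s => c t * (Ioi t).indicator ω s := by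
      ext s; by_cases h : t < s <;> simp [hf, indicator, h]
    rw [h1, integral_const_mul, integral_indicator measurableSet_Ioi,
      Measure.restrict_restrict measurableSet_Ioi]
    have h3 : Ioi t ∩ Ioc 0 1 = Ioc t 1 := by
      ext s
      simp only [mem_inter_iff, mem_Ioi, mem_Ioc]
      constructor
      · rintro ⟨h, _, h1⟩; exact ⟨h, h1⟩
      · rintro ⟨h, h1⟩; exact ⟨h, lt_trans ht.1 h, h1⟩
    rw [h3, tl, intervalIntegral.integral_of_le ht.2]
  rw [← hL, hswap, hR]

lemma tl_continuousOn (hint : IntegrableOn ω (Ico (0:ℝ) 1)) :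
    ContinuousOn (tl ω) (Icc (0:ℝ) 1) := by
  have h : IntegrableOn ω (uIcc (0:ℝ) 1) := by
    rw [uIcc_of_le zero_le_one]; exact hIcc hint
  have := intervalIntegral.continuousOn_primitive_interval_left (a := 0) (b := 1)
    (μ := volume) (f := ω) h
  rwa [uIcc_of_le zero_le_one] at this

lemma tl_nonneg (hpos : ∀ r ∈ Ico (0:ℝ) 1, 0 < tl ω r) :
    ∀ r ∈ Icc (0:ℝ) 1, 0 ≤ tl ω r := by
  intro r hr
  rcases lt_or_eq_of_le hr.2 with h1 | h1
  · exact (hpos r ⟨hr.1, h1⟩).le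
  · simp [tl, h1]

theorem stmt2 (ω : ℝ → ℝ)
    (hnn : ∀ t ∈ Ico (0:ℝ) 1, 0 ≤ ω t)
    (hint : IntegrableOn ω (Ico (0:ℝ) 1))
    (hpos : ∀ r ∈ Ico (0:ℝ) 1, 0 < tl ω r)
    (C : ℝ) (hC : 1 ≤ C)
    (hdbl : ∀ r ∈ Ico (0:ℝ) 1, tl ω r ≤ C * tl ω ((1 + r) / 2)) :
    ∃ C' > (0:ℝ), ∀ n : ℕ, 1 ≤ n → mom ω n ≤ C' * mom ω (2 * n) := by
  refine ⟨2 * C, by linarith, fun n hn => ?_⟩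
  have hgc : ContinuousOn (tl ω) (Icc (0:ℝ) 1) := tl_continuousOn hint
  have hg0 : ∀ r ∈ Icc (0:ℝ) 1, 0 ≤ tl ω r := tl_nonneg hpos
  have hC0 : (0:ℝ) ≤ C := by linarith
  have hmaps : MapsTo (fun t : ℝ => (1 + t) / 2) (Icc (0:ℝ) 1) (Icc (0:ℝ) 1) := by
    intro t ht
    constructor
    · have := ht.1; dsimp only; linarith
    · have := ht.2; dsimp only; linarith
  have hgc2 : ContinuousOn (fun t => tl ω ((1 + t)/2)) (Icc (0:ℝ) 1) :=
    hgc.comp (by fun_prop) hmaps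
  set A := ∫ t in (0:ℝ)..1, t ^ (n-1) * tl ω t with hA
  set B := ∫ t in (0:ℝ)..1, t ^ (2*n-1) * tl ω t with hB
  -- interval integrability facts
  have hiP : ∀ m : ℕ, IntervalIntegrable (fun t => t ^ m * tl ω t) volume 0 1 := by
    intro m
    apply ContinuousOn.intervalIntegrable
    rw [uIcc_of_le zero_le_one]
    exact ((continuous_pow m).continuousOn).mul hgc
  have hiCB : IntervalIntegrable (fun t => C * (t ^ (n-1) * tl ω ((1+t)/2))) volume 0 1 := by
    apply IntervalIntegrable.const_mul
    apply ContinuousOn.intervalIntegrable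
    rw [uIcc_of_le zero_le_one]
    exact ((continuous_pow _).continuousOn).mul hgc2
  have hsub : Icc (1/2 : ℝ) 1 ⊆ Icc (0:ℝ) 1 := Icc_subset_Icc (by norm_num) le_rfl
  have hi3 : IntervalIntegrable (fun u => (2*u-1) ^ (n-1) * tl ω u) volume (1/2) 1 := by
    apply ContinuousOn.intervalIntegrable
    rw [uIcc_of_le (by norm_num : (1/2:ℝ) ≤ 1)]
    exact (Continuous.continuousOn (by fun_prop)).mul (hgc.mono hsub)
  have hi4m : IntervalIntegrable (fun u => u ^ (2*n-1) * tl ω u) volume (1/2) 1 :=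
    (hiP (2*n-1)).mono_set (by rw [uIcc_of_le (by norm_num : (1/2:ℝ) ≤ 1), uIcc_of_le zero_le_one]; exact hsub)
  have hi4 : IntervalIntegrable (fun u => 2 * (u ^ (2*n-1) * tl ω u)) volume (1/2) 1 :=
    hi4m.const_mul 2
  have hi5 : IntervalIntegrable (fun u => u ^ (2*n-1) * tl ω u) volume 0 (1/2) :=
    (hiP (2*n-1)).mono_set (by rw [uIcc_of_le (by norm_num : (0:ℝ) ≤ 1/2), uIcc_of_le zero_le_one]; exact Icc_subset_Icc le_rfl (by norm_num))
  -- Step 1: doubling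
  have step1 : A ≤ C * ∫ t in (0:ℝ)..1, t ^ (n-1) * tl ω ((1+t)/2) := by
    rw [← intervalIntegral.integral_const_mul]
    apply intervalIntegral.integral_mono_on zero_le_one (hiP (n-1)) hiCB
    intro t ht
    rcases lt_or_eq_of_le ht.2 with h1 | h1
    · have hd := hdbl t ⟨ht.1, h1⟩
      have hp : 0 ≤ t ^ (n-1) := pow_nonneg ht.1 _
      calc t ^ (n-1) * tl ω t ≤ t ^ (n-1) * (C * tl ω ((1+t)/2)) :=
            mul_le_mul_of_nonneg_left hd hp
        _ = C * (t ^ (n-1) * tl ω ((1+t)/2)) := by ring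
    · subst h1
      have h2 : ((1:ℝ)+1)/2 = 1 := by norm_num
      simp [tl, h2, intervalIntegral.integral_same]
  -- Step 2: substitution u = (1+t)/2
  have step2 : ∫ t in (0:ℝ)..1, t ^ (n-1) * tl ω ((1+t)/2)
      = 2 * ∫ u in (1/2:ℝ)..1, (2*u-1) ^ (n-1) * tl ω u := by
    calc ∫ t in (0:ℝ)..1, t ^ (n-1) * tl ω ((1+t)/2)
        = ∫ t in (0:ℝ)..1, (fun u => (2*u-1) ^ (n-1) * tl ω u) (1/2 * t + 1/2) := by
          apply intervalIntegral.integral_congr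
          intro t _
          simp only []
          rw [show (2*((1:ℝ)/2*t+1/2)-1) = t from by ring,
            show ((1:ℝ)/2*t+1/2) = (1+t)/2 from by ring]
      _ = ((1/2:ℝ))⁻¹ • ∫ u in ((1:ℝ)/2*0+1/2)..((1:ℝ)/2*1+1/2), (2*u-1) ^ (n-1) * tl ω u :=
          intervalIntegral.integral_comp_mul_add (c := (1/2:ℝ)) (f := fun u => (2*u-1) ^ (n-1) * tl ω u) (by norm_num) (1/2)
      _ = 2 * ∫ u in (1/2:ℝ)..1, (2*u-1) ^ (n-1) * tl ω u := by norm_num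
  -- Step 3: pointwise bound (2u-1)^(n-1) ≤ 2 u^(2n-1)
  have step3 : ∫ u in (1/2:ℝ)..1, (2*u-1) ^ (n-1) * tl ω u
      ≤ ∫ u in (1/2:ℝ)..1, 2 * (u ^ (2*n-1) * tl ω u) := by
    apply intervalIntegral.integral_mono_on (by norm_num) hi3 hi4
    intro u hu
    have hg : 0 ≤ tl ω u := hg0 u (hsub hu)
    have hu0 : (0:ℝ) < u := lt_of_lt_of_le (by norm_num) hu.1
    have h1 : (0:ℝ) ≤ 2*u-1 := by linarith [hu.1]
    have h2 : (2*u-1) ^ (n-1) ≤ (u^2) ^ (n-1) := by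
      apply pow_le_pow_left₀ h1
      nlinarith [hu.2]
    have h3 : (u^2) ^ (n-1) = u ^ (2*n-2) := by
      rw [← pow_mul]; congr 1; omega
    have h4 : u ^ (2*n-2) ≤ 2 * u ^ (2*n-1) := by
      have h5 : 2*n-1 = (2*n-2)+1 := by omega
      rw [h5, pow_succ]
      nlinarith [pow_nonneg hu0.le (2*n-2), hu.1]
    calc (2*u-1) ^ (n-1) * tl ω u ≤ (2 * u ^ (2*n-1)) * tl ω u := by
          apply mul_le_mul_of_nonneg_right _ hg
          calc (2*u-1) ^ (n-1) ≤ (u^2) ^ (n-1) := h2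
            _ = u ^ (2*n-2) := h3
            _ ≤ 2 * u ^ (2*n-1) := h4
      _ = 2 * (u ^ (2*n-1) * tl ω u) := by ring
  -- Step 4: extend to [0,1]
  have step4 : ∫ u in (1/2:ℝ)..1, u ^ (2*n-1) * tl ω u ≤ B := by
    have hsplit : (∫ u in (0:ℝ)..(1/2), u ^ (2*n-1) * tl ω u)
        + ∫ u in (1/2:ℝ)..1, u ^ (2*n-1) * tl ω u = B :=
      intervalIntegral.integral_add_adjacent_intervals hi5 hi4m
    have hpos0 : 0 ≤ ∫ u in (0:ℝ)..(1/2), u ^ (2*n-1) * tl ω u := by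
      apply intervalIntegral.integral_nonneg (by norm_num)
      intro u hu
      exact mul_nonneg (pow_nonneg hu.1 _) (hg0 u ⟨hu.1, le_trans hu.2 (by norm_num)⟩)
    linarith
  have hAB : A ≤ C * (4 * B) := by
    have e3 : ∫ u in (1/2:ℝ)..1, 2 * (u ^ (2*n-1) * tl ω u)
        = 2 * ∫ u in (1/2:ℝ)..1, u ^ (2*n-1) * tl ω u :=
      intervalIntegral.integral_const_mul _ _
    calc A ≤ C * ∫ t in (0:ℝ)..1, t ^ (n-1) * tl ω ((1+t)/2) := step1
      _ = C * (2 * ∫ u in (1/2:ℝ)..1, (2*u-1) ^ (n-1) * tl ω u) := by rw [step2]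
      _ ≤ C * (2 * (2 * ∫ u in (1/2:ℝ)..1, u ^ (2*n-1) * tl ω u)) := by
          rw [← e3]
          apply mul_le_mul_of_nonneg_left _ hC0
          exact mul_le_mul_of_nonneg_left step3 (by norm_num)
      _ ≤ C * (2 * (2 * B)) := by
          apply mul_le_mul_of_nonneg_left _ hC0
          apply mul_le_mul_of_nonneg_left _ (by norm_num)
          exact mul_le_mul_of_nonneg_left step4 (by norm_num)
      _ = C * (4 * B) := by ring
  have h2n : 1 ≤ 2*n := by omega
  have e1 : mom ω n = (n:ℝ) * A := by
    rw [momA hint hn, hA, ← intervalIntegral.integral_const_mul]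
    apply intervalIntegral.integral_congr
    intro t _; ring
  have e2 : mom ω (2*n) = ((2*n : ℕ):ℝ) * B := by
    rw [momA hint h2n, hB, ← intervalIntegral.integral_const_mul]
    apply intervalIntegral.integral_congr
    intro t _; ring
  rw [e1, e2]
  push_cast
  have hfin : (n:ℝ) * A ≤ (n:ℝ) * (C * (4 * B)) :=
    mul_le_mul_of_nonneg_left hAB (Nat.cast_nonneg n)
  calc (n:ℝ) * A ≤ (n:ℝ) * (C * (4 * B)) := hfin
    _ = 2 * C * (2 * (n:ℝ) * B) := by ring
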